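/- Let N ≥ 2, 𝒩 = {1,...,N}, and let (y^n) be a sequence in ℝ^𝒩 with ‖y^n‖_var → ∞ as n → ∞, where ‖x‖_var = max_{i∈𝒩} x_i − min_{i∈𝒩} x_i. Then there exist nonempty disjoint proper subsets I, J ⊊ 𝒩, vectors μ ∈ ℝ^I, ν ∈ ℝ^J with nonnegative entries satisfying min_{i∈I} μ_i = 0 and min_{j∈J} ν_j = 0, and a subsequence (y^{n_k}) such that for every x ∈ ℝ^𝒩, the values ‖x − y^{n_k}‖_var − ‖y^{n_k}‖_var converge as k → ∞ to h(x) = max_{i∈I} (x_i − μ_i) − min_{j∈J} (x_j + ν_j). -/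

import Mathlib

open Filter Topology Finset ENNReal

section helpers

variable {ι : Type*}

lemma lvar_sup'_add_const (s : Finset ι) (h : s.Nonempty) (f : ι → ℝ) (c : ℝ) :
    s.sup' h (fun i => f i + c) = s.sup' h f + c :=
  (Finset.comp_sup'_eq_sup'_comp h (· + c) (fun x y => (max_add_add_right x y c).symm)).symm

lemma lvar_inf'_add_const (s : Finset ι) (h : s.Nonempty) (f : ι → ℝ) (c : ℝ) :
    s.inf' h (fun i => f i + c) = s.inf' h f + c :=
  (Finset.apply_inf'_eq_inf'_comp h (· + c) (fun x y => (min_add_add_right x y c).symm)).symm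

end helpers

/-- Lemma 6.1 of the paper, for the variation pseudo-norm
`‖x‖_var = max_i x_i - min_i x_i` on `ℝ^𝒩`. -/
theorem lvar_horofunction_subsequence (N : ℕ) (hN : 2 ≤ N) (y : ℕ → Fin N → ℝ)
    (hy : Tendsto (fun n => (⨆ i, y n i) - ⨅ i, y n i) atTop atTop) :
    ∃ I J : Finset (Fin N), ∃ hI : I.Nonempty, ∃ hJ : J.Nonempty,
      Disjoint I J ∧ I ⊂ Finset.univ ∧ J ⊂ Finset.univ ∧
    ∃ μ ν : Fin N → ℝ,
      (∀ i ∈ I, 0 ≤ μ i) ∧ (∀ j ∈ J, 0 ≤ ν j) ∧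
      I.inf' hI μ = 0 ∧ J.inf' hJ ν = 0 ∧
    ∃ φ : ℕ → ℕ, StrictMono φ ∧
      ∀ x : Fin N → ℝ,
        Tendsto (fun k =>
            ((⨆ i, (x i - y (φ k) i)) - ⨅ i, (x i - y (φ k) i))
              - ((⨆ i, y (φ k) i) - ⨅ i, y (φ k) i)) atTop
          (𝓝 (I.sup' hI (fun i => x i - μ i) - J.inf' hJ (fun j => x j + ν j))) := by
  have hN0 : 0 < N := by omega
  haveI : Nonempty (Fin N) := ⟨⟨0, hN0⟩⟩
  set m : ℕ → ℝ := fun n => ⨅ i, y n i with hm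
  set M : ℕ → ℝ := fun n => ⨆ i, y n i with hM
  set b : ℕ → Fin N → ℝ := fun n i => y n i - m n with hbdef
  set a : ℕ → Fin N → ℝ := fun n i => M n - y n i with hadef
  have hb0 : ∀ n i, 0 ≤ b n i := fun n i =>
    sub_nonneg.2 (ciInf_le (Set.finite_range _).bddBelow i)
  have ha0 : ∀ n i, 0 ≤ a n i := fun n i =>
    sub_nonneg.2 (le_ciSup (Set.finite_range _).bddAbove i)
  -- compactness extraction
  obtain ⟨⟨L, K⟩, φ, hφ, hconv⟩ := CompactSpace.tendsto_subseq
      (fun n => ((fun i => ENNReal.ofReal (b n i), fun i => ENNReal.ofReal (a n i)) :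
        (Fin N → ℝ≥0∞) × (Fin N → ℝ≥0∞)))
  have hL : ∀ i, Tendsto (fun k => ENNReal.ofReal (b (φ k) i)) atTop (𝓝 (L i)) := by
    intro i
    have h1 := (continuous_fst.tendsto _).comp hconv
    exact ((continuous_apply i).tendsto _).comp h1
  have hK : ∀ i, Tendsto (fun k => ENNReal.ofReal (a (φ k) i)) atTop (𝓝 (K i)) := by
    intro i
    have h1 := (continuous_snd.tendsto _).comp hconv
    exact ((continuous_apply i).tendsto _).comp h1
  -- the variation tends to infinity along the subsequence
  have hr : Tendsto (fun k => M (φ k) - m (φ k)) atTop atTop := hy.comp hφ.tendsto_atTop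
  -- for each i, L i + K i = ⊤
  have hsum : ∀ i, L i + K i = ⊤ := by
    intro i
    have h1 : Tendsto (fun k => ENNReal.ofReal (b (φ k) i) + ENNReal.ofReal (a (φ k) i))
        atTop (𝓝 (L i + K i)) := (hL i).add (hK i)
    have h2 : Tendsto (fun k => ENNReal.ofReal (b (φ k) i) + ENNReal.ofReal (a (φ k) i))
        atTop (𝓝 ⊤) := by
      rw [ENNReal.tendsto_nhds_top_iff_nat]
      intro j
      filter_upwards [hr.eventually_gt_atTop (j : ℝ)] with k hk
      rw [← ENNReal.ofReal_add (hb0 _ _) (ha0 _ _)]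
      have : b (φ k) i + a (φ k) i = M (φ k) - m (φ k) := by
        simp only [hbdef, hadef]; ring
      rw [this]
      calc (j : ℝ≥0∞) = ENNReal.ofReal (j : ℝ) := by simp
        _ < ENNReal.ofReal (M (φ k) - m (φ k)) :=
          (ENNReal.ofReal_lt_ofReal_iff (lt_of_le_of_lt (Nat.cast_nonneg j) hk)).2 hk
    exact tendsto_nhds_unique h1 h2
  -- definitions of the sets and vectors
  set I : Finset (Fin N) := Finset.univ.filter (fun i => L i ≠ ⊤) with hIdef
  set J : Finset (Fin N) := Finset.univ.filter (fun i => K i ≠ ⊤) with hJdef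
  set μ : Fin N → ℝ := fun i => (L i).toReal with hμdef
  set ν : Fin N → ℝ := fun i => (K i).toReal with hνdef
  -- existence of a zero of L
  have hLzero : ∃ i, L i = 0 := by
    by_contra h
    push_neg at h
    have hev : ∀ᶠ k in atTop, ∀ i, (0 : ℝ≥0∞) < ENNReal.ofReal (b (φ k) i) := by
      rw [Filter.eventually_all]
      intro i
      exact (hL i).eventually_const_lt (pos_iff_ne_zero.2 (h i))
    obtain ⟨k, hk⟩ := hev.exists
    obtain ⟨i, hi⟩ := exists_eq_ciInf_of_finite (f := y (φ k))
    have hb := hk i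
    rw [show b (φ k) i = 0 by simp only [hbdef, hm]; rw [← hi, sub_self]] at hb
    simp at hb
  have hKzero : ∃ i, K i = 0 := by
    by_contra h
    push_neg at h
    have hev : ∀ᶠ k in atTop, ∀ i, (0 : ℝ≥0∞) < ENNReal.ofReal (a (φ k) i) := by
      rw [Filter.eventually_all]
      intro i
      exact (hK i).eventually_const_lt (pos_iff_ne_zero.2 (h i))
    obtain ⟨k, hk⟩ := hev.exists
    obtain ⟨i, hi⟩ := exists_eq_ciSup_of_finite (f := y (φ k))
    have hb := hk i
    rw [show a (φ k) i = 0 by simp only [hadef, hM]; rw [← hi, sub_self]] at hb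
    simp at hb
  obtain ⟨i₀, hi₀⟩ := hLzero
  obtain ⟨j₀, hj₀⟩ := hKzero
  have hi₀I : i₀ ∈ I := by simp [hIdef, hi₀]
  have hj₀J : j₀ ∈ J := by simp [hJdef, hj₀]
  have hI : I.Nonempty := ⟨i₀, hi₀I⟩
  have hJ : J.Nonempty := ⟨j₀, hj₀J⟩
  have hdisj : Disjoint I J := by
    rw [Finset.disjoint_left]
    intro i hiI hiJ
    simp only [hIdef, hJdef, Finset.mem_filter] at hiI hiJ
    exact (ENNReal.add_ne_top.2 ⟨hiI.2, hiJ.2⟩) (hsum i)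
  have hIssub : I ⊂ Finset.univ := by
    rw [Finset.ssubset_univ_iff]
    intro h
    exact (Finset.disjoint_left.1 hdisj (h ▸ Finset.mem_univ j₀) hj₀J)
  have hJssub : J ⊂ Finset.univ := by
    rw [Finset.ssubset_univ_iff]
    intro h
    exact (Finset.disjoint_left.1 hdisj hi₀I (h ▸ Finset.mem_univ i₀))
  refine ⟨I, J, hI, hJ, hdisj, hIssub, hJssub, μ, ν, ?_, ?_, ?_, ?_, φ, hφ, ?_⟩
  · exact fun i _ => ENNReal.toReal_nonneg
  · exact fun j _ => ENNReal.toReal_nonneg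
  · refine le_antisymm ?_ (Finset.le_inf' _ _ fun i _ => ENNReal.toReal_nonneg)
    calc I.inf' hI μ ≤ μ i₀ := Finset.inf'_le _ hi₀I
      _ = 0 := by simp [hμdef, hi₀]
  · refine le_antisymm ?_ (Finset.le_inf' _ _ fun i _ => ENNReal.toReal_nonneg)
    calc J.inf' hJ ν ≤ ν j₀ := Finset.inf'_le _ hj₀J
      _ = 0 := by simp [hνdef, hj₀]
  -- main convergence
  intro x
  have hune : (Finset.univ : Finset (Fin N)).Nonempty := Finset.univ_nonempty
  -- pointwise limits of b and a
  have hbI : ∀ i ∈ I, Tendsto (fun k => b (φ k) i) atTop (𝓝 (μ i)) := by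
    intro i hiI
    have hne : L i ≠ ⊤ := by simpa [hIdef] using hiI
    have := (ENNReal.tendsto_toReal hne).comp (hL i)
    refine this.congr fun k => ?_
    simp only [Function.comp_apply]
    exact ENNReal.toReal_ofReal (hb0 _ _)
  have haJ : ∀ i ∈ J, Tendsto (fun k => a (φ k) i) atTop (𝓝 (ν i)) := by
    intro i hiJ
    have hne : K i ≠ ⊤ := by simpa [hJdef] using hiJ
    have := (ENNReal.tendsto_toReal hne).comp (hK i)
    refine this.congr fun k => ?_
    simp only [Function.comp_apply]
    exact ENNReal.toReal_ofReal (ha0 _ _)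
  have hbtop : ∀ i ∉ I, Tendsto (fun k => b (φ k) i) atTop atTop := by
    intro i hiI
    have htop : L i = ⊤ := by
      by_contra h; exact hiI (by simp [hIdef, h])
    rw [tendsto_atTop]
    intro C
    rcases le_or_gt C 0 with hC | hC
    · exact Eventually.of_forall fun k => hC.trans (hb0 _ _)
    · have : ∀ᶠ k in atTop, ENNReal.ofReal C < ENNReal.ofReal (b (φ k) i) := by
        refine (hL i).eventually (isOpen_Ioi.eventually_mem ?_)
        rw [htop]
        exact ENNReal.ofReal_lt_top
      filter_upwards [this] with k hk
      exact le_of_lt ((ENNReal.ofReal_lt_ofReal_iff_of_nonneg hC.le).1 hk)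
  have hatop : ∀ i ∉ J, Tendsto (fun k => a (φ k) i) atTop atTop := by
    intro i hiJ
    have htop : K i = ⊤ := by
      by_contra h; exact hiJ (by simp [hJdef, h])
    rw [tendsto_atTop]
    intro C
    rcases le_or_gt C 0 with hC | hC
    · exact Eventually.of_forall fun k => hC.trans (ha0 _ _)
    · have : ∀ᶠ k in atTop, ENNReal.ofReal C < ENNReal.ofReal (a (φ k) i) := by
        refine (hK i).eventually (isOpen_Ioi.eventually_mem ?_)
        rw [htop]
        exact ENNReal.ofReal_lt_top
      filter_upwards [this] with k hk
      exact le_of_lt ((ENNReal.ofReal_lt_ofReal_iff_of_nonneg hC.le).1 hk)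
  -- convergence of restricted sup'/inf'
  have hsupI : Tendsto (fun k => I.sup' hI (fun i => x i - b (φ k) i)) atTop
      (𝓝 (I.sup' hI (fun i => x i - μ i))) :=
    Filter.Tendsto.finset_sup'_nhds_apply hI fun i hiI => (tendsto_const_nhds.sub (hbI i hiI))
  have hinfJ : Tendsto (fun k => J.inf' hJ (fun i => x i + a (φ k) i)) atTop
      (𝓝 (J.inf' hJ (fun i => x i + ν i))) :=
    Filter.Tendsto.finset_inf'_nhds_apply hJ fun i hiJ => (tendsto_const_nhds.add (haJ i hiJ))
  -- eventually, sup over univ equals sup over I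
  set S : ℝ := I.sup' hI (fun i => x i - μ i) with hSdef
  set T : ℝ := J.inf' hJ (fun i => x i + ν i) with hTdef
  have hevsup : ∀ᶠ k in atTop,
      Finset.univ.sup' hune (fun i => x i - b (φ k) i)
        = I.sup' hI (fun i => x i - b (φ k) i) := by
    have h1 : ∀ᶠ k in atTop, S - 1 < I.sup' hI (fun i => x i - b (φ k) i) :=
      hsupI.eventually_const_lt (by linarith)
    have h2 : ∀ᶠ k in atTop, ∀ i ∉ I, x i - b (φ k) i < S - 1 := by
      rw [Filter.eventually_all]
      intro i
      by_cases hiI : i ∈ I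
      · simp [hiI]
      · have : Tendsto (fun k => x i - b (φ k) i) atTop atBot := by
          simpa [sub_eq_add_neg] using
            tendsto_atBot_add_const_left atTop (x i)
              (tendsto_neg_atTop_atBot.comp (hbtop i hiI))
        filter_upwards [this.eventually_lt_atBot (S - 1)] with k hk
        intro _; exact hk
    filter_upwards [h1, h2] with k hk1 hk2
    refine le_antisymm ?_ ?_
    · rw [Finset.sup'_le_iff]
      intro i _
      by_cases hiI : i ∈ I
      · exact Finset.le_sup' (fun j => x j - b (φ k) j) hiI
      · exact le_of_lt ((hk2 i hiI).trans hk1)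
    · rw [Finset.sup'_le_iff]
      intro i hiI
      exact Finset.le_sup' (fun j => x j - b (φ k) j) (Finset.mem_univ i)
  have hevinf : ∀ᶠ k in atTop,
      Finset.univ.inf' hune (fun i => x i + a (φ k) i)
        = J.inf' hJ (fun i => x i + a (φ k) i) := by
    have h1 : ∀ᶠ k in atTop, J.inf' hJ (fun i => x i + a (φ k) i) < T + 1 :=
      hinfJ.eventually_lt_const (by linarith)
    have h2 : ∀ᶠ k in atTop, ∀ i ∉ J, T + 1 < x i + a (φ k) i := by
      rw [Filter.eventually_all]
      intro i
      by_cases hiJ : i ∈ J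
      · simp [hiJ]
      · have : Tendsto (fun k => x i + a (φ k) i) atTop atTop :=
          tendsto_atTop_add_const_left _ _ (hatop i hiJ)
        filter_upwards [this.eventually_gt_atTop (T + 1)] with k hk
        intro _; exact hk
    filter_upwards [h1, h2] with k hk1 hk2
    refine le_antisymm ?_ ?_
    · rw [Finset.le_inf'_iff]
      intro i hiJ
      exact Finset.inf'_le (fun j => x j + a (φ k) j) (Finset.mem_univ i)
    · rw [Finset.le_inf'_iff]
      intro i _
      by_cases hiJ : i ∈ J
      · exact Finset.inf'_le (fun j => x j + a (φ k) j) hiJ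
      · exact le_of_lt (hk1.trans (hk2 i hiJ))
  -- combine
  have hmain : Tendsto (fun k =>
      Finset.univ.sup' hune (fun i => x i - b (φ k) i)
        - Finset.univ.inf' hune (fun i => x i + a (φ k) i)) atTop (𝓝 (S - T)) := by
    have h1 : Tendsto (fun k => Finset.univ.sup' hune (fun i => x i - b (φ k) i)) atTop
        (𝓝 S) := by
      refine hsupI.congr' ?_
      filter_upwards [hevsup] with k hk using hk.symm
    have h2 : Tendsto (fun k => Finset.univ.inf' hune (fun i => x i + a (φ k) i)) atTop
        (𝓝 T) := by
      refine hinfJ.congr' ?_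
      filter_upwards [hevinf] with k hk using hk.symm
    exact h1.sub h2
  refine hmain.congr fun k => ?_
  -- the algebraic identity
  have e1 : (⨆ i, (x i - y (φ k) i))
      = Finset.univ.sup' hune (fun i => x i - b (φ k) i) + (- m (φ k)) := by
    rw [← lvar_sup'_add_const Finset.univ hune (fun i => x i - b (φ k) i) (- m (φ k)),
      ← Finset.sup'_univ_eq_ciSup]
    congr 1
    funext i
    simp [hbdef]; ring
  have e2 : (⨅ i, (x i - y (φ k) i))
      = Finset.univ.inf' hune (fun i => x i + a (φ k) i) + (- M (φ k)) := by
    rw [← lvar_inf'_add_const Finset.univ hune (fun i => x i + a (φ k) i) (- M (φ k)),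
      ← Finset.inf'_univ_eq_ciInf]
    congr 1
    funext i
    simp [hadef]; ring
  have e3 : (⨆ i, y (φ k) i) = M (φ k) := rfl
  have e4 : (⨅ i, y (φ k) i) = m (φ k) := rfl
  rw [e1, e2, e3, e4]
  ring
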